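/- Let v be C^3 on [-D, D] and u the unique quadratic polynomial matching the averages of v on [-D,-h], [-h,h], [h,D] (0 < h < D). Then sup_{x∈[-D,D]} |u(x) - v(x)| ≤ C D^3 sup_{x∈[-D,D]} |v'''(x)| for an absolute constant C. -/

import Mathlib

open MeasureTheory intervalIntegral

private lemma quadCont (A B C : ℝ) : Continuous (fun x : ℝ => A + B * x + C * x ^ 2) := by
  continuity

private lemma quadInt (A B C l r : ℝ) :
    ∫ x in l..r, (A + B * x + C * x ^ 2)
      = A * (r - l) + B * (r ^ 2 - l ^ 2) / 2 + C * (r ^ 3 - l ^ 3) / 3 := by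
  have hd : ∀ x : ℝ, HasDerivAt (fun x : ℝ => A * x + B * x ^ 2 / 2 + C * x ^ 3 / 3)
      (A + B * x + C * x ^ 2) x := by
    intro x
    have h1 : HasDerivAt (fun x : ℝ => A * x) (A * 1) x := (hasDerivAt_id x).const_mul A
    have h2 : HasDerivAt (fun x : ℝ => B * x ^ 2 / 2) (B * (↑2 * x ^ 1) / 2) x :=
      ((hasDerivAt_pow 2 x).const_mul B).div_const 2
    have h3 : HasDerivAt (fun x : ℝ => C * x ^ 3 / 3) (C * (↑3 * x ^ 2) / 3) x :=
      ((hasDerivAt_pow 3 x).const_mul C).div_const 3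
    have := (h1.add h2).add h3
    refine this.congr_deriv ?_
    push_cast
    ring
  rw [intervalIntegral.integral_eq_sub_of_hasDerivAt (fun x _ => hd x)
    ((quadCont A B C).intervalIntegrable l r)]
  ring

private lemma iterWithin_eq (v : ℝ → ℝ) (hv : ContDiff ℝ 3 v) {s : Set ℝ}
    (hs : UniqueDiffOn ℝ s) {x : ℝ} (hx : x ∈ s) (n : ℕ) (hn : (n : ℕ∞) ≤ 3) :
    iteratedDerivWithin n v s x = iteratedDeriv n v x := by
  have h := (contDiff_iff_ftaylorSeries.mp hv).hasFTaylorSeriesUpToOn s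
  have h2 := h.eq_iteratedFDerivWithin_of_uniqueDiffOn (by exact_mod_cast hn) hs hx
  rw [iteratedDerivWithin_eq_iteratedFDerivWithin, iteratedDeriv_eq_iteratedFDeriv, ← h2]
  rfl

private lemma quad_coeff_bound {h D ε α β γ I1 I2 I3 x : ℝ}
    (hh : 0 < h) (hhD : h < D) (hε0 : 0 ≤ ε)
    (E1 : α * (D - h) + β * (h ^ 2 - D ^ 2) / 2 + γ * (D ^ 3 - h ^ 3) / 3 = I1)
    (E2 : α * (2 * h) + γ * (2 * h ^ 3) / 3 = I2)
    (E3 : α * (D - h) + β * (D ^ 2 - h ^ 2) / 2 + γ * (D ^ 3 - h ^ 3) / 3 = I3)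
    (hI1b : |I1| ≤ ε * (D - h)) (hI2b : |I2| ≤ ε * (2 * h)) (hI3b : |I3| ≤ ε * (D - h))
    (hxD : |x| ≤ D) : |α + β * x + γ * x ^ 2| ≤ 11 * ε := by
  have hD : 0 < D := hh.trans hhD
  have hDhpos : 0 < D - h := sub_pos.mpr hhD
  have hbb : |β| * (D + h) ≤ 2 * ε := by
    have key : β * (D ^ 2 - h ^ 2) = I3 - I1 := by linear_combination E3 - E1
    have h4 : |β| * ((D + h) * (D - h)) ≤ (2 * ε) * (D - h) := by
      have : |β| * ((D + h) * (D - h)) = |β * (D ^ 2 - h ^ 2)| := by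
        rw [abs_mul]
        rw [abs_of_nonneg (by nlinarith : (0:ℝ) ≤ D ^ 2 - h ^ 2)]
        ring
      rw [this, key]
      calc |I3 - I1| ≤ |I3| + |I1| := abs_sub _ _
        _ ≤ ε * (D - h) + ε * (D - h) := add_le_add hI3b hI1b
        _ = 2 * ε * (D - h) := by ring
    have h4' : (|β| * (D + h)) * (D - h) ≤ (2 * ε) * (D - h) := by
      calc (|β| * (D + h)) * (D - h) = |β| * ((D + h) * (D - h)) := by ring
        _ ≤ (2 * ε) * (D - h) := h4
    exact le_of_mul_le_mul_right h4' hDhpos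
  have hgg : |γ| * (D * (D + h)) ≤ 6 * ε := by
    have key : γ * (2 * h * (D - h) * (D * (D + h)) / 3)
        = h * (I1 + I3) - (D - h) * I2 := by
      linear_combination h * E1 + h * E3 - (D - h) * E2
    have hpos : (0:ℝ) < 2 * h * (D - h) / 3 := by positivity
    have h4 : (|γ| * (D * (D + h))) * (2 * h * (D - h) / 3)
        ≤ (6 * ε) * (2 * h * (D - h) / 3) := by
      have lhs_eq : (|γ| * (D * (D + h))) * (2 * h * (D - h) / 3)
          = |γ * (2 * h * (D - h) * (D * (D + h)) / 3)| := by
        rw [abs_mul]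
        rw [abs_of_nonneg (by positivity : (0:ℝ) ≤ 2 * h * (D - h) * (D * (D + h)) / 3)]
        ring
      rw [lhs_eq, key]
      calc |h * (I1 + I3) - (D - h) * I2|
          ≤ |h * (I1 + I3)| + |(D - h) * I2| := abs_sub _ _
        _ = h * |I1 + I3| + (D - h) * |I2| := by
            rw [abs_mul, abs_mul, abs_of_pos hh, abs_of_pos hDhpos]
        _ ≤ h * (|I1| + |I3|) + (D - h) * |I2| := by
            have := abs_add_le I1 I3
            nlinarith
        _ ≤ h * (ε * (D - h) + ε * (D - h)) + (D - h) * (ε * (2 * h)) := by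
            have : |I1| + |I3| ≤ ε * (D - h) + ε * (D - h) := add_le_add hI1b hI3b
            nlinarith
        _ = (6 * ε) * (2 * h * (D - h) / 3) := by ring
    exact le_of_mul_le_mul_right h4 hpos
  have hgD2 : |γ| * D ^ 2 ≤ 6 * ε := by
    refine le_trans ?_ hgg
    apply mul_le_mul_of_nonneg_left _ (abs_nonneg γ)
    nlinarith
  have haa : |α| ≤ 3 * ε := by
    have key : α * (2 * h) = I2 - γ * (2 * h ^ 3) / 3 := by linear_combination E2
    have hgh2 : |γ| * h ^ 2 ≤ 6 * ε := by
      refine le_trans ?_ hgg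
      apply mul_le_mul_of_nonneg_left _ (abs_nonneg γ)
      nlinarith
    have h4 : |α| * (2 * h) ≤ (3 * ε) * (2 * h) := by
      have lhs_eq : |α| * (2 * h) = |α * (2 * h)| := by
        rw [abs_mul, abs_of_pos (by positivity : (0:ℝ) < 2 * h)]
      rw [lhs_eq, key]
      have habs : |γ * (2 * h ^ 3) / 3| = (|γ| * h ^ 2) * (2 * h) / 3 := by
        rw [abs_div, abs_mul,
          abs_of_nonneg (by positivity : (0:ℝ) ≤ 2 * h ^ 3),
          abs_of_nonneg (by norm_num : (0:ℝ) ≤ (3:ℝ))]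
        ring
      calc |I2 - γ * (2 * h ^ 3) / 3|
          ≤ |I2| + |γ * (2 * h ^ 3) / 3| := abs_sub _ _
        _ = |I2| + (|γ| * h ^ 2) * (2 * h) / 3 := by rw [habs]
        _ ≤ ε * (2 * h) + (6 * ε) * (2 * h) / 3 := by
            have h5 := mul_le_mul_of_nonneg_right hgh2 (by positivity : (0:ℝ) ≤ 2 * h)
            linarith
        _ = (3 * ε) * (2 * h) := by ring
    exact le_of_mul_le_mul_right h4 (by positivity)
  have hq : |α + β * x + γ * x ^ 2| ≤ 11 * ε := by
    have t1 : |β * x| ≤ 2 * ε := by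
      rw [abs_mul]
      calc |β| * |x| ≤ |β| * (D + h) := by
            apply mul_le_mul_of_nonneg_left _ (abs_nonneg β)
            linarith
        _ ≤ 2 * ε := hbb
    have t2 : |γ * x ^ 2| ≤ 6 * ε := by
      rw [abs_mul, abs_pow]
      calc |γ| * |x| ^ 2 ≤ |γ| * D ^ 2 := by
            apply mul_le_mul_of_nonneg_left _ (abs_nonneg γ)
            exact pow_le_pow_left₀ (abs_nonneg x) hxD 2
        _ ≤ 6 * ε := hgD2
    calc |α + β * x + γ * x ^ 2| ≤ |α + β * x| + |γ * x ^ 2| := abs_add_le _ _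
      _ ≤ |α| + |β * x| + |γ * x ^ 2| := by have := abs_add_le α (β * x); linarith
      _ ≤ 3 * ε + 2 * ε + 6 * ε := by linarith
      _ = 11 * ε := by ring
  exact hq

/-- If `v` is `C³` and `u = a + b x + c x²` is the quadratic matching the
averages of `v` on `[-D,-h]`, `[-h,h]`, `[h,D]` (`0 < h < D`), then
`sup_{[-D,D]} |u - v| ≤ C D³ sup_{[-D,D]} |v'''|` for an absolute constant `C`. -/
theorem lifting_sup_error_bound :
    ∃ C > (0 : ℝ), ∀ (v : ℝ → ℝ), ContDiff ℝ 3 v →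
      ∀ (h D a b c M : ℝ), 0 < h → h < D →
      (∀ x ∈ Set.Icc (-D) D, |iteratedDeriv 3 v x| ≤ M) →
      ((1 / (D - h)) * ∫ x in (-D)..(-h), (a + b * x + c * x ^ 2)
        = (1 / (D - h)) * ∫ x in (-D)..(-h), v x) →
      ((1 / (2 * h)) * ∫ x in (-h)..h, (a + b * x + c * x ^ 2)
        = (1 / (2 * h)) * ∫ x in (-h)..h, v x) →
      ((1 / (D - h)) * ∫ x in h..D, (a + b * x + c * x ^ 2)
        = (1 / (D - h)) * ∫ x in h..D, v x) →
      ∀ x ∈ Set.Icc (-D) D, |(a + b * x + c * x ^ 2) - v x| ≤ C * D ^ 3 * M := by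
  refine ⟨48, by norm_num, ?_⟩
  intro v hv h D a b c M hh hhD hM h1 h2 h3 x hx
  have hD : 0 < D := hh.trans hhD
  have hDhpos : 0 < D - h := sub_pos.mpr hhD
  have hDD : (-D : ℝ) ≤ D := by linarith
  set s : Set ℝ := Set.Icc (-D) D with hs
  have hus : UniqueDiffOn ℝ s := uniqueDiffOn_Icc (by linarith)
  have hM0 : 0 ≤ M := le_trans (abs_nonneg _) (hM 0 ⟨by linarith, by linarith⟩)
  -- Taylor polynomial of degree 2 at -D
  set P : ℝ → ℝ := taylorWithinEval v 2 s (-D) with hPdef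
  set ε : ℝ := 4 * M * D ^ 3 with hε
  have hε0 : 0 ≤ ε := by positivity
  have hvC : ContDiffOn ℝ 3 v s := hv.contDiffOn
  have hTaylor : ∀ y ∈ s, |v y - P y| ≤ ε := by
    intro y hy
    have hC : ∀ z ∈ Set.Icc (-D) D, ‖iteratedDerivWithin 3 v (Set.Icc (-D) D) z‖ ≤ M := by
      intro z hz
      rw [Real.norm_eq_abs, iterWithin_eq v hv hus hz 3 le_rfl]
      exact hM z hz
    have := taylor_mean_remainder_bound (n := 2) hDD (by exact_mod_cast hvC) hy hC
    rw [Real.norm_eq_abs] at this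
    refine this.trans ?_
    have hy1 : y + D ≤ 2 * D := by have := hy.2; linarith
    have hy0 : 0 ≤ y + D := by have := hy.1; linarith
    have : M * (y - (-D)) ^ 3 ≤ M * (2 * D) ^ 3 := by
      apply mul_le_mul_of_nonneg_left _ hM0
      have : y - (-D) = y + D := by ring
      rw [this]
      exact pow_le_pow_left₀ hy0 hy1 3
    calc M * (y - -D) ^ (2 + 1) / ↑(Nat.factorial 2)
        = M * (y - -D) ^ 3 / 2 := by norm_num [Nat.factorial]
      _ ≤ M * (2 * D) ^ 3 / 2 := by linarith
      _ = ε := by rw [hε]; ring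
  -- P is an explicit quadratic
  set d0 : ℝ := v (-D)
  set d1 : ℝ := iteratedDerivWithin 1 v s (-D)
  set d2 : ℝ := iteratedDerivWithin 2 v s (-D)
  set p0 : ℝ := d0 + D * d1 + D ^ 2 * d2 / 2 with hp0
  set p1 : ℝ := d1 + D * d2 with hp1
  set p2 : ℝ := d2 / 2 with hp2
  have hP : ∀ y : ℝ, P y = p0 + p1 * y + p2 * y ^ 2 := by
    intro y
    rw [hPdef, taylor_within_apply]
    simp [Finset.sum_range_succ, Nat.factorial, iteratedDerivWithin_zero, smul_eq_mul]
    rw [hp0, hp1, hp2]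
    simp only [d0, d1, d2, iteratedDerivWithin_one]
    ring
  have hPcont : Continuous P := by
    have : P = fun y => p0 + p1 * y + p2 * y ^ 2 := funext hP
    rw [this]; exact quadCont p0 p1 p2
  have hvcont : Continuous v := hv.continuous
  -- Integral of P over any interval
  have hintP : ∀ l r : ℝ, ∫ y in l..r, P y
      = p0 * (r - l) + p1 * (r ^ 2 - l ^ 2) / 2 + p2 * (r ^ 3 - l ^ 3) / 3 := by
    intro l r
    rw [intervalIntegral.integral_congr (g := fun y => p0 + p1 * y + p2 * y ^ 2)
      (fun y _ => hP y)]
    exact quadInt p0 p1 p2 l r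
  -- cancel prefactors in the hypotheses
  have hne1 : (1 / (D - h) : ℝ) ≠ 0 := by positivity
  have hne2 : (1 / (2 * h) : ℝ) ≠ 0 := by positivity
  have e1 := mul_left_cancel₀ hne1 h1
  have e2 := mul_left_cancel₀ hne2 h2
  have e3 := mul_left_cancel₀ hne1 h3
  -- the error integrals
  set α : ℝ := a - p0 with hα
  set β : ℝ := b - p1 with hβ
  set γ : ℝ := c - p2 with hγ
  have hIdiff : ∀ l r : ℝ, ∫ y in l..r, (v y - P y)
      = (∫ y in l..r, v y) - ∫ y in l..r, P y := by
    intro l r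
    exact intervalIntegral.integral_sub (hvcont.intervalIntegrable l r)
      (hPcont.intervalIntegrable l r)
  set I1 : ℝ := ∫ y in (-D)..(-h), (v y - P y) with hI1
  set I2 : ℝ := ∫ y in (-h)..h, (v y - P y) with hI2
  set I3 : ℝ := ∫ y in h..D, (v y - P y) with hI3
  have E1 : α * (D - h) + β * (h ^ 2 - D ^ 2) / 2 + γ * (D ^ 3 - h ^ 3) / 3 = I1 := by
    rw [hI1, hIdiff, ← e1, quadInt, hintP]; simp only [hα, hβ, hγ]; ring
  have E2 : α * (2 * h) + γ * (2 * h ^ 3) / 3 = I2 := by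
    rw [hI2, hIdiff, ← e2, quadInt, hintP]; simp only [hα, hβ, hγ]; ring
  have E3 : α * (D - h) + β * (D ^ 2 - h ^ 2) / 2 + γ * (D ^ 3 - h ^ 3) / 3 = I3 := by
    rw [hI3, hIdiff, ← e3, quadInt, hintP]; simp only [hα, hβ, hγ]; ring
  -- bounds on the error integrals
  have hbound : ∀ l r : ℝ, -D ≤ l → l ≤ r → r ≤ D →
      |∫ y in l..r, (v y - P y)| ≤ ε * (r - l) := by
    intro l r hl hlr hr
    have := intervalIntegral.norm_integral_le_of_norm_le_const (C := ε)
      (f := fun y => v y - P y) (a := l) (b := r) ?_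
    · rw [Real.norm_eq_abs] at this
      refine this.trans ?_
      rw [abs_of_nonneg (by linarith)]
    · intro y hy
      rw [Set.uIoc_of_le hlr] at hy
      have hys : y ∈ s := ⟨le_trans hl hy.1.le, le_trans hy.2 hr⟩
      rw [Real.norm_eq_abs]
      exact hTaylor y hys
  have hI1b : |I1| ≤ ε * (D - h) := by
    rw [hI1]
    exact (hbound (-D) (-h) le_rfl (by linarith) (by linarith)).trans (le_of_eq (by ring))
  have hI2b : |I2| ≤ ε * (2 * h) := by
    rw [hI2]
    exact (hbound (-h) h (by linarith) (by linarith) (by linarith)).trans (le_of_eq (by ring))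
  have hI3b : |I3| ≤ ε * (D - h) := by
    rw [hI3]
    exact hbound h D (by linarith) (by linarith) le_rfl
  have hxD : |x| ≤ D := abs_le.mpr ⟨hx.1, hx.2⟩
  have hq : |α + β * x + γ * x ^ 2| ≤ 11 * ε :=
    quad_coeff_bound hh hhD hε0 E1 E2 E3 hI1b hI2b hI3b hxD
  have hsplit : (a + b * x + c * x ^ 2) - v x
      = (α + β * x + γ * x ^ 2) - (v x - P x) := by
    rw [hP x, hα, hβ, hγ]; ring
  rw [hsplit]
  calc |(α + β * x + γ * x ^ 2) - (v x - P x)|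
      ≤ |α + β * x + γ * x ^ 2| + |v x - P x| := abs_sub _ _
    _ ≤ 11 * ε + ε := add_le_add hq (hTaylor x hx)
    _ = 48 * D ^ 3 * M := by rw [hε]; ring
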